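/- Let ρ : [0,T] → M be a differentiable curve in the Hermitian matrices solving ρ'(t) = -i[H,ρ(t)] + γD(ρ(t)) with D(ρ) = VρVᴴ - ½VᴴVρ - ½ρVᴴV, H Hermitian, γ ≥ 0, and time-independent coefficients. If ρ(0) is positive semidefinite, then ρ(t) is positive semidefinite for all t ∈ [0,T]. -/

import Mathlib

open Matrix
open scoped ComplexOrder

attribute [local instance] Matrix.frobeniusNormedAddCommGroup
  Matrix.frobeniusNormedRing Matrix.frobeniusNormedAlgebra

namespace LindbladAux

variable {n : ℕ}

/-- quadratic form of a matrix -/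
noncomputable def q (x : Fin n → ℂ) (M : Matrix (Fin n) (Fin n) ℂ) : ℂ :=
  star x ⬝ᵥ (M *ᵥ x)

/-- squared ℓ² norm -/
noncomputable def s (x : Fin n → ℂ) : ℝ := ∑ i, Complex.normSq (x i)

lemma s_nonneg (x : Fin n → ℂ) : 0 ≤ s x :=
  Finset.sum_nonneg fun _ _ => Complex.normSq_nonneg _

lemma normSq_le_s (x : Fin n → ℂ) (i : Fin n) : Complex.normSq (x i) ≤ s x :=
  Finset.single_le_sum (fun j _ => Complex.normSq_nonneg (x j)) (Finset.mem_univ i)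

lemma dotProduct_star_self (x : Fin n → ℂ) : star x ⬝ᵥ x = ((s x : ℝ) : ℂ) := by
  simp only [dotProduct, s, Pi.star_apply, Complex.star_def]
  push_cast
  refine Finset.sum_congr rfl fun i _ => ?_
  rw [Complex.normSq_eq_conj_mul_self]

lemma q_add (x : Fin n → ℂ) (M N : Matrix (Fin n) (Fin n) ℂ) :
    q x (M + N) = q x M + q x N := by
  simp [q, Matrix.add_mulVec, dotProduct_add]

lemma q_smul (x : Fin n → ℂ) (c : ℂ) (M : Matrix (Fin n) (Fin n) ℂ) :
    q x (c • M) = c * q x M := by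
  simp [q, Matrix.smul_mulVec, dotProduct_smul, smul_eq_mul]

lemma q_smul_one (x : Fin n → ℂ) (c : ℝ) :
    q x ((c : ℂ) • (1 : Matrix (Fin n) (Fin n) ℂ)) = (c : ℂ) * ((s x : ℝ) : ℂ) := by
  rw [q_smul, q, Matrix.one_mulVec, dotProduct_star_self]

/-- conjugation identity for quadratic forms -/
lemma q_conj (x : Fin n → ℂ) (B M : Matrix (Fin n) (Fin n) ℂ) :
    q x (B * M * Bᴴ) = q (Bᴴ *ᵥ x) M := by
  have h1 : star (Bᴴ *ᵥ x) = star x ᵥ* B := by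
    rw [Matrix.star_mulVec, Matrix.conjTranspose_conjTranspose]
  rw [q, q, ← Matrix.mulVec_mulVec, ← Matrix.mulVec_mulVec, Matrix.dotProduct_mulVec, h1]

/-- a Hermitian matrix with nonnegative real quadratic form is PSD -/
lemma posSemidef_of_re {M : Matrix (Fin n) (Fin n) ℂ} (hM : M.IsHermitian)
    (h : ∀ x, 0 ≤ (q x M).re) : M.PosSemidef := by
  refine PosSemidef.of_dotProduct_mulVec_nonneg hM fun x => ?_
  have hsym : star (star x ⬝ᵥ (M *ᵥ x)) = star x ⬝ᵥ (M *ᵥ x) := by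
    rw [← Matrix.star_dotProduct, Matrix.star_mulVec, ← Matrix.dotProduct_mulVec, hM.eq]
  have him : (star x ⬝ᵥ (M *ᵥ x)).im = 0 := by
    have := congrArg Complex.im hsym
    simp only [Complex.star_def, Complex.conj_im] at this
    linarith
  rw [Complex.le_def]
  refine ⟨by simpa [q] using h x, by simp [him]⟩

/-- lower bound on quadratic form from shifted positivity -/
lemma re_q_ge {M : Matrix (Fin n) (Fin n) ℂ} {c : ℝ}
    (h : (M + (c : ℂ) • 1).PosSemidef) (x : Fin n → ℂ) :
    -(c * s x) ≤ (q x M).re := by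
  have h2 : 0 ≤ RCLike.re (star x ⬝ᵥ ((M + (c : ℂ) • 1) *ᵥ x)) :=
    (Complex.le_def.1 (h.dotProduct_mulVec_nonneg x)).1
  have h3 : (q x (M + (c : ℂ) • 1)).re = (q x M).re + c * s x := by
    rw [q_add, q_smul_one]
    simp [Complex.add_re, Complex.re_ofReal_mul]
  have h4 : RCLike.re (star x ⬝ᵥ ((M + (c : ℂ) • 1) *ᵥ x)) = (q x (M + (c : ℂ) • 1)).re := rfl
  rw [h4, h3] at h2
  linarith

lemma normSq_sum_le (u : Fin n → ℂ) :
    Complex.normSq (∑ j, u j) ≤ (n : ℝ) * ∑ j, Complex.normSq (u j) := by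
  have h1 : ‖∑ j, u j‖ ≤ ∑ j, ‖u j‖ := by
    simpa using norm_sum_le Finset.univ u
  have h2 : (∑ j, ‖u j‖) ^ 2 ≤ (n : ℝ) * ∑ j, ‖u j‖ ^ 2 := by
    simpa using sq_sum_le_card_mul_sum_sq (s := Finset.univ) (f := fun j => ‖u j‖)
  have h3 : Complex.normSq (∑ j, u j) ≤ (∑ j, ‖u j‖) ^ 2 := by
    rw [← Complex.sq_norm]
    exact pow_le_pow_left₀ (norm_nonneg _) h1 2
  calc Complex.normSq (∑ j, u j) ≤ (∑ j, ‖u j‖) ^ 2 := h3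
    _ ≤ (n : ℝ) * ∑ j, ‖u j‖ ^ 2 := h2
    _ = (n : ℝ) * ∑ j, Complex.normSq (u j) := by simp [Complex.sq_norm]

/-- Cauchy–Schwarz-type bound on image vectors -/
lemma s_mulVec_le (M : Matrix (Fin n) (Fin n) ℂ) (x : Fin n → ℂ) :
    s (M *ᵥ x) ≤ ((n : ℝ) * ∑ i, ∑ j, Complex.normSq (M i j)) * s x := by
  have key : ∀ i, Complex.normSq ((M *ᵥ x) i) ≤
      (n : ℝ) * ((∑ j, Complex.normSq (M i j)) * s x) := by
    intro i
    have h1 : Complex.normSq ((M *ᵥ x) i) ≤ (n : ℝ) * ∑ j, Complex.normSq (M i j * x j) :=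
      normSq_sum_le (fun j => M i j * x j)
    have h2 : ∑ j, Complex.normSq (M i j * x j) ≤ (∑ j, Complex.normSq (M i j)) * s x := by
      rw [Finset.sum_mul]
      refine Finset.sum_le_sum fun j _ => ?_
      rw [Complex.normSq_mul]
      exact mul_le_mul_of_nonneg_left (normSq_le_s x j) (Complex.normSq_nonneg _)
    calc Complex.normSq ((M *ᵥ x) i) ≤ (n : ℝ) * ∑ j, Complex.normSq (M i j * x j) := h1
      _ ≤ (n : ℝ) * ((∑ j, Complex.normSq (M i j)) * s x) :=
          mul_le_mul_of_nonneg_left h2 (Nat.cast_nonneg n)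
  calc s (M *ᵥ x) ≤ ∑ i, (n : ℝ) * ((∑ j, Complex.normSq (M i j)) * s x) :=
        Finset.sum_le_sum fun i _ => key i
    _ = ((n : ℝ) * ∑ i, ∑ j, Complex.normSq (M i j)) * s x := by
        rw [← Finset.mul_sum, ← Finset.sum_mul]; ring

/-- perturbation bound on quadratic forms -/
lemma abs_re_q_le (x : Fin n → ℂ) (M : Matrix (Fin n) (Fin n) ℂ) :
    |(q x M).re| ≤ (∑ i, ∑ j, ‖M i j‖) * s x := by
  have hq : q x M = ∑ i, ∑ j, star (x i) * M i j * x j := by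
    simp only [q, dotProduct, mulVec, Finset.mul_sum]
    exact Finset.sum_congr rfl fun i _ => Finset.sum_congr rfl fun j _ => by
      simp [dotProduct]; ring
  have habs : ‖q x M‖ ≤ ∑ i, ∑ j, ‖M i j‖ * s x := by
    rw [hq]
    refine (norm_sum_le (E := ℂ) _ _).trans (Finset.sum_le_sum fun i _ => ?_)
    refine (norm_sum_le (E := ℂ) _ _).trans (Finset.sum_le_sum fun j _ => ?_)
    have : ‖star (x i) * M i j * x j‖
        = ‖M i j‖ * (‖x i‖ * ‖x j‖) := by
      simp [_root_.map_mul]; ring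
    rw [this]
    refine mul_le_mul_of_nonneg_left ?_ (norm_nonneg _)
    have h1 : ‖x i‖ ^ 2 ≤ s x := by rw [Complex.sq_norm]; exact normSq_le_s x i
    have h2 : ‖x j‖ ^ 2 ≤ s x := by rw [Complex.sq_norm]; exact normSq_le_s x j
    nlinarith [norm_nonneg (x i), norm_nonneg (x j),
      sq_nonneg (‖x i‖ - ‖x j‖)]
  calc |(q x M).re| ≤ ‖q x M‖ := Complex.abs_re_le_norm _
    _ ≤ ∑ i, ∑ j, ‖M i j‖ * s x := habs
    _ = (∑ i, ∑ j, ‖M i j‖) * s x := by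
        rw [Finset.sum_mul]; exact Finset.sum_congr rfl fun i _ => by rw [Finset.sum_mul]

/-- the quadratic form as a continuous ℝ-linear map -/
noncomputable def qL (x : Fin n → ℂ) : Matrix (Fin n) (Fin n) ℂ →L[ℝ] ℂ :=
  LinearMap.toContinuousLinearMap
    { toFun := fun M => star x ⬝ᵥ (M *ᵥ x)
      map_add' := fun M N => by simp only [Matrix.add_mulVec, dotProduct_add]
      map_smul' := fun r M => by
        simp only [RingHom.id_apply, Matrix.smul_mulVec, dotProduct_smul] }

lemma hasDerivAt_q (x : Fin n → ℂ) {σ : ℝ → Matrix (Fin n) (Fin n) ℂ}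
    {σ' : Matrix (Fin n) (Fin n) ℂ} {t : ℝ} (h : HasDerivAt σ σ' t) :
    HasDerivAt (fun u => (q x (σ u)).re) ((q x σ').re) t := by
  have h1 : HasDerivAt (fun u => q x (σ u)) (q x σ') t :=
    (qL x).hasFDerivAt.comp_hasDerivAt t h
  exact (Complex.reCLM.hasFDerivAt.comp_hasDerivAt t h1 : )

end LindbladAux

open LindbladAux in
/-- Positivity preservation for the (time-independent) Lindblad equation:
if `ρ : [0,T] → Hermitian matrices` solves `ρ' = -i[H,ρ] + γ D(ρ)` with
`D(ρ) = VρVᴴ - ½VᴴVρ - ½ρVᴴV`, `H` Hermitian, `γ ≥ 0`, and `ρ(0)` is positive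
semidefinite, then `ρ(t)` is positive semidefinite for all `t ∈ [0,T]`. -/
theorem lindblad_positivity_preservation {n : ℕ} (T : ℝ) (hT : 0 ≤ T)
    (H V : Matrix (Fin n) (Fin n) ℂ) (hH : H.IsHermitian) (γ : ℝ) (hγ : 0 ≤ γ)
    (ρ : ℝ → Matrix (Fin n) (Fin n) ℂ)
    (hherm : ∀ t ∈ Set.Icc (0:ℝ) T, (ρ t).IsHermitian)
    (hρ : ∀ t ∈ Set.Icc (0:ℝ) T, HasDerivAt ρ
      ((-Complex.I) • (H * ρ t - ρ t * H) +
        (γ : ℂ) • (V * ρ t * Vᴴ - (1/2 : ℂ) • (Vᴴ * V * ρ t)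
          - (1/2 : ℂ) • (ρ t * (Vᴴ * V)))) t)
    (h0 : (ρ 0).PosSemidef) :
    ∀ t ∈ Set.Icc (0:ℝ) T, (ρ t).PosSemidef := by
  classical
  set A : Matrix (Fin n) (Fin n) ℂ := (-Complex.I) • H - (((γ/2 : ℝ)) : ℂ) • (Vᴴ * V) with hA
  have hAH : Aᴴ = Complex.I • H - (((γ/2 : ℝ)) : ℂ) • (Vᴴ * V) := by
    rw [hA, Matrix.conjTranspose_sub, Matrix.conjTranspose_smul, Matrix.conjTranspose_smul,
      hH.eq, Matrix.conjTranspose_mul, Matrix.conjTranspose_conjTranspose]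
    simp [Complex.star_def]
  -- exponential conjugation data
  set G : ℝ → Matrix (Fin n) (Fin n) ℂ := fun u => NormedSpace.exp (u • (-A)) with hGdef
  set Gc : ℝ → Matrix (Fin n) (Fin n) ℂ := fun u => NormedSpace.exp (u • (-Aᴴ)) with hGcdef
  set E : ℝ → Matrix (Fin n) (Fin n) ℂ := fun u => NormedSpace.exp (u • A) with hEdef
  set Ec : ℝ → Matrix (Fin n) (Fin n) ℂ := fun u => NormedSpace.exp (u • Aᴴ) with hEcdef
  have hexpH : ∀ (M : Matrix (Fin n) (Fin n) ℂ) (u : ℝ),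
      (NormedSpace.exp (u • M))ᴴ = NormedSpace.exp (u • Mᴴ) := by
    intro M u
    rw [← Matrix.exp_conjTranspose]
    congr 1
    rw [Matrix.conjTranspose_smul]
    simp
  have hexpmul : ∀ (M : Matrix (Fin n) (Fin n) ℂ) (u : ℝ),
      NormedSpace.exp (u • (-M)) * NormedSpace.exp (u • M) = 1 := by
    intro M u
    rw [← Matrix.exp_add_of_commute]
    · rw [show u • (-M) + u • M = 0 by simp, NormedSpace.exp_zero]
    · rw [show u • (-M) = -(u • M) by simp]
      exact (Commute.refl (u • M)).neg_left
  have hGH : ∀ u, (G u)ᴴ = Gc u := by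
    intro u
    rw [hGdef, hGcdef]
    simp only [hexpH, Matrix.conjTranspose_neg]
  have hEH : ∀ u, (E u)ᴴ = Ec u := by
    intro u
    rw [hEdef, hEcdef]
    simp only [hexpH]
  have hEG : ∀ u, E u * G u = 1 := by
    intro u
    show NormedSpace.exp (u • A) * NormedSpace.exp (u • (-A)) = 1
    rw [← Matrix.exp_add_of_commute]
    · rw [show u • A + u • (-A) = 0 by simp, NormedSpace.exp_zero]
    · rw [show u • (-A) = -(u • A) by simp]
      exact (Commute.refl (u • A)).neg_right
  have hGcEc : ∀ u, Gc u * Ec u = 1 := fun u => hexpmul Aᴴ u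
  -- the conjugated solution
  set σ : ℝ → Matrix (Fin n) (Fin n) ℂ := fun u => G u * ρ u * Gc u with hσdef
  have hσ0 : σ 0 = ρ 0 := by
    rw [hσdef]
    simp [hGdef, hGcdef, NormedSpace.exp_zero]
  have hσherm : ∀ t ∈ Set.Icc (0:ℝ) T, (σ t).IsHermitian := by
    intro t ht
    have h1 : (Gc t)ᴴ = G t := by rw [← hGH t, Matrix.conjTranspose_conjTranspose]
    show (G t * ρ t * Gc t)ᴴ = G t * ρ t * Gc t
    rw [Matrix.conjTranspose_mul, Matrix.conjTranspose_mul, h1, (hherm t ht).eq, hGH t,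
      Matrix.mul_assoc]
  have hρσ : ∀ u, ρ u = E u * σ u * Ec u := by
    intro u
    have h1 : E u * (G u * ρ u * Gc u) * Ec u
        = (E u * G u) * (ρ u * (Gc u * Ec u)) := by
      simp only [Matrix.mul_assoc]
    show ρ u = E u * (G u * ρ u * Gc u) * Ec u
    rw [h1, hEG, hGcEc, Matrix.one_mul, Matrix.mul_one]
  -- the conjugating family for the dissipator
  set B : ℝ → Matrix (Fin n) (Fin n) ℂ := fun u => G u * V * E u with hBdef
  have hBH : ∀ u, (B u)ᴴ = Ec u * Vᴴ * Gc u := by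
    intro u
    show (G u * V * E u)ᴴ = Ec u * Vᴴ * Gc u
    rw [Matrix.conjTranspose_mul, Matrix.conjTranspose_mul, hEH, hGH]
    simp only [Matrix.mul_assoc]
  -- derivative of the conjugated solution
  have hσ' : ∀ t ∈ Set.Icc (0:ℝ) T, HasDerivAt σ ((γ:ℂ) • (B t * σ t * (B t)ᴴ)) t := by
    intro t ht
    have hL : (-Complex.I) • (H * ρ t - ρ t * H) +
        (γ : ℂ) • (V * ρ t * Vᴴ - (1/2 : ℂ) • (Vᴴ * V * ρ t) - (1/2 : ℂ) • (ρ t * (Vᴴ * V)))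
        = A * ρ t + ρ t * Aᴴ + (γ:ℂ) • (V * ρ t * Vᴴ) := by
      rw [hAH, hA]
      push_cast
      simp only [smul_sub, smul_smul, sub_mul, mul_sub, Matrix.smul_mul, Matrix.mul_smul,
        mul_assoc]
      module
    have hcom : Gc t * (-Aᴴ) = (-Aᴴ) * Gc t :=
      (Commute.exp_left ((Commute.refl (-Aᴴ)).smul_left t)).eq
    have hG' : HasDerivAt G (G t * (-A)) t := hasDerivAt_exp_smul_const (-A) t
    have hGc' : HasDerivAt Gc (Gc t * (-Aᴴ)) t := hasDerivAt_exp_smul_const (-Aᴴ) t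
    have h2 : B t * σ t * (B t)ᴴ = G t * (V * ρ t * Vᴴ) * Gc t := by
      rw [hBH t]
      show (G t * V * E t) * (G t * ρ t * Gc t) * (Ec t * Vᴴ * Gc t)
          = G t * (V * ρ t * Vᴴ) * Gc t
      have hEG' : ∀ X : Matrix (Fin n) (Fin n) ℂ, E t * (G t * X) = X := fun X => by
        rw [← Matrix.mul_assoc, hEG, Matrix.one_mul]
      have hGcEc' : ∀ X : Matrix (Fin n) (Fin n) ℂ, Gc t * (Ec t * X) = X := fun X => by
        rw [← Matrix.mul_assoc, hGcEc, Matrix.one_mul]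
      simp only [Matrix.mul_assoc, hEG', hGcEc']
    have h1 := (hG'.mul (hρ t ht)).mul hGc'
    refine HasDerivAt.congr_deriv h1 ?_
    rw [hL, hcom, h2]
    simp only [Matrix.mul_add, Matrix.add_mul, Matrix.neg_mul, Matrix.mul_neg,
      Matrix.mul_smul, Matrix.smul_mul, Matrix.mul_assoc, Pi.mul_apply]
    abel
  have hσcont : ∀ t ∈ Set.Icc (0:ℝ) T, ContinuousAt σ t := fun t ht =>
    (hσ' t ht).continuousAt
  -- a bound for the conjugators
  have hexpcont : ∀ M : Matrix (Fin n) (Fin n) ℂ,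
      Continuous (fun u : ℝ => NormedSpace.exp (u • M)) := fun M =>
    NormedSpace.exp_continuous.comp (continuous_id.smul continuous_const)
  have hBcont : Continuous B := ((hexpcont (-A)).mul continuous_const).mul (hexpcont A)
  set cB : ℝ → ℝ := fun u => (n:ℝ) * ∑ i, ∑ j, Complex.normSq ((B u)ᴴ i j) with hcBdef
  have hcBcont : Continuous cB := by
    refine continuous_const.mul ?_
    refine continuous_finset_sum _ fun i _ => continuous_finset_sum _ fun j _ => ?_
    exact Complex.continuous_normSq.comp ((hBcont.matrix_conjTranspose).matrix_elem i j)
  have hcB0 : ∀ u, 0 ≤ cB u := fun u =>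
    mul_nonneg (Nat.cast_nonneg n) (Finset.sum_nonneg fun i _ =>
      Finset.sum_nonneg fun j _ => Complex.normSq_nonneg _)
  have hsB : ∀ (u : ℝ) (x : Fin n → ℂ), s ((B u)ᴴ *ᵥ x) ≤ cB u * s x := fun u x =>
    s_mulVec_le _ x
  obtain ⟨u₀, hu₀, hmax⟩ := isCompact_Icc.exists_isMaxOn (⟨0, Set.left_mem_Icc.2 hT⟩ :
    (Set.Icc (0:ℝ) T).Nonempty) hcBcont.continuousOn
  set K : ℝ := 1 + γ * cB u₀ with hKdef
  have hK1 : 1 ≤ K := le_add_of_nonneg_right (mul_nonneg hγ (hcB0 u₀))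
  have hKc : ∀ u ∈ Set.Icc (0:ℝ) T, γ * cB u ≤ K - 1 := by
    intro u hu
    have := hmax hu
    simp only [hKdef, add_sub_cancel_left]
    exact mul_le_mul_of_nonneg_left this hγ
  -- the ε-perturbed positivity claim
  have main : ∀ ε > (0:ℝ), ∀ t ∈ Set.Icc (0:ℝ) T,
      (σ t + ((ε * Real.exp (K * t) : ℝ) : ℂ) • 1).PosSemidef := by
    intro ε hε
    by_contra hcon
    push_neg at hcon
    obtain ⟨t₁, ht₁, hbad₁⟩ := hcon
    set Bad : Set ℝ := {b | b ∈ Set.Icc (0:ℝ) T ∧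
      ¬ (σ b + ((ε * Real.exp (K * b) : ℝ) : ℂ) • 1).PosSemidef} with hBadDef
    have hBadne : Bad.Nonempty := ⟨t₁, ht₁, hbad₁⟩
    have hBadbd : BddBelow Bad := ⟨0, fun b hb => hb.1.1⟩
    set τ : ℝ := sInf Bad with hτdef
    have hτ0 : 0 ≤ τ := le_csInf hBadne fun b hb => hb.1.1
    have hτle : ∀ b ∈ Bad, τ ≤ b := fun b hb => csInf_le hBadbd hb
    have hτT : τ ≤ T := le_trans (hτle t₁ ⟨ht₁, hbad₁⟩) ht₁.2
    have hτIcc : τ ∈ Set.Icc (0:ℝ) T := ⟨hτ0, hτT⟩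
    have hgoodlt : ∀ u, 0 ≤ u → u < τ →
        (σ u + ((ε * Real.exp (K * u) : ℝ) : ℂ) • 1).PosSemidef := by
      intro u hu0 huτ
      by_contra hbad
      exact absurd (hτle u ⟨⟨hu0, le_trans huτ.le hτT⟩, hbad⟩) (not_le.2 huτ)
    -- monotonicity of the perturbed quadratic forms on [0,τ]
    have hmono : ∀ x : Fin n → ℂ,
        (q x (σ 0)).re + Real.exp (K * 0) * (ε * s x)
          ≤ (q x (σ τ)).re + Real.exp (K * τ) * (ε * s x) := by
      intro x
      set f : ℝ → ℝ := fun u => (q x (σ u)).re + Real.exp (K * u) * (ε * s x) with hfdef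
      have hderiv : ∀ u ∈ Set.Icc (0:ℝ) T, HasDerivAt f
          (γ * (q ((B u)ᴴ *ᵥ x) (σ u)).re + K * Real.exp (K * u) * (ε * s x)) u := by
        intro u hu
        have h1 : HasDerivAt (fun v => (q x (σ v)).re)
            ((q x ((γ:ℂ) • (B u * σ u * (B u)ᴴ))).re) u := hasDerivAt_q x (hσ' u hu)
        have h2 : (q x ((γ:ℂ) • (B u * σ u * (B u)ᴴ))).re
            = γ * (q ((B u)ᴴ *ᵥ x) (σ u)).re := by
          rw [q_smul, q_conj, Complex.re_ofReal_mul]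
        rw [h2] at h1
        have h3 : HasDerivAt (fun v : ℝ => Real.exp (K * v)) (K * Real.exp (K * u)) u := by
          have h4 : HasDerivAt (fun v : ℝ => K * v) K u := by
            simpa using (hasDerivAt_id u).const_mul K
          have h5 := (Real.hasDerivAt_exp (K * u)).comp u h4
          exact h5.congr_deriv (by ring)
        exact h1.add (h3.mul_const (ε * s x))
      have hfc : ContinuousOn f (Set.Icc 0 τ) := by
        intro u hu
        have huT : u ∈ Set.Icc (0:ℝ) T := ⟨hu.1, le_trans hu.2 hτT⟩
        exact ((hderiv u huT).continuousAt).continuousWithinAt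
      have hfd : DifferentiableOn ℝ f (interior (Set.Icc 0 τ)) := by
        intro u hu
        rw [interior_Icc] at hu
        have huT : u ∈ Set.Icc (0:ℝ) T := ⟨hu.1.le, le_trans hu.2.le hτT⟩
        exact ((hderiv u huT).differentiableAt).differentiableWithinAt
      have hf0 : ∀ u ∈ interior (Set.Icc (0:ℝ) τ), 0 ≤ deriv f u := by
        intro u hu
        rw [interior_Icc] at hu
        have huT : u ∈ Set.Icc (0:ℝ) T := ⟨hu.1.le, le_trans hu.2.le hτT⟩
        rw [(hderiv u huT).deriv]
        set z : Fin n → ℂ := (B u)ᴴ *ᵥ x with hzdef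
        have hgood := hgoodlt u hu.1.le hu.2
        have e1 : -(ε * Real.exp (K * u) * s z) ≤ (q z (σ u)).re := re_q_ge hgood z
        have e2 : s z ≤ cB u * s x := hsB u x
        have e3 : γ * cB u ≤ K - 1 := hKc u huT
        have he : (0:ℝ) < Real.exp (K * u) := Real.exp_pos _
        have hsx : 0 ≤ s x := s_nonneg x
        have hsz : 0 ≤ s z := s_nonneg z
        have e4 : γ * -(ε * Real.exp (K * u) * s z) ≤ γ * (q z (σ u)).re :=
          mul_le_mul_of_nonneg_left e1 hγ
        nlinarith [mul_le_mul_of_nonneg_left e2 (mul_nonneg hγ (mul_nonneg hε.le he.le)),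
          mul_le_mul_of_nonneg_right e3 (mul_nonneg (mul_nonneg hε.le he.le) hsx),
          mul_nonneg (mul_nonneg hε.le he.le) hsx, mul_pos hε he, hK1]
      have := monotoneOn_of_deriv_nonneg (convex_Icc 0 τ) hfc hfd hf0
        (Set.left_mem_Icc.2 hτ0) (Set.right_mem_Icc.2 hτ0) hτ0
      exact this
    -- at time τ we have a strict gap
    have hτgap : ∀ x : Fin n → ℂ,
        ε * s x ≤ (q x (σ τ + ((ε * Real.exp (K * τ) : ℝ) : ℂ) • 1)).re := by
      intro x
      have h0' : 0 ≤ (q x (σ 0)).re := by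
        rw [hσ0]
        have := (Complex.le_def.1 (h0.dotProduct_mulVec_nonneg x)).1
        simpa [q] using this
      have hm := hmono x
      rw [mul_zero, Real.exp_zero, one_mul] at hm
      have : (q x (σ τ + ((ε * Real.exp (K * τ) : ℝ) : ℂ) • 1)).re
          = (q x (σ τ)).re + ε * Real.exp (K * τ) * s x := by
        rw [q_add, q_smul_one, Complex.add_re, ← Complex.ofReal_mul, Complex.ofReal_re]
      rw [this]
      linarith [s_nonneg x]
    -- continuity gives goodness slightly beyond τ
    set Mτ : Matrix (Fin n) (Fin n) ℂ := σ τ + ((ε * Real.exp (K * τ) : ℝ) : ℂ) • 1 with hMτdef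
    set φ : ℝ → ℝ := fun u => ∑ i, ∑ j,
      ‖(σ u + ((ε * Real.exp (K * u) : ℝ) : ℂ) • 1 - Mτ) i j‖ with hφdef
    have hφτ : φ τ = 0 := by
      have h : σ τ + ((ε * Real.exp (K * τ) : ℝ) : ℂ) • 1 - Mτ = 0 := by
        rw [hMτdef]; exact sub_self _
      show (∑ i, ∑ j,
        ‖(σ τ + ((ε * Real.exp (K * τ) : ℝ) : ℂ) • 1 - Mτ) i j‖) = 0
      rw [h]
      simp
    have hΨcont : ContinuousAt
        (fun u => σ u + ((ε * Real.exp (K * u) : ℝ) : ℂ) • (1 : Matrix (Fin n) (Fin n) ℂ) - Mτ)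
        τ := by
      refine ContinuousAt.sub (ContinuousAt.add (hσcont τ hτIcc) ?_) continuousAt_const
      refine ContinuousAt.smul (f := fun u => ((ε * Real.exp (K * u) : ℝ) : ℂ))
        (g := fun _ => (1 : Matrix (Fin n) (Fin n) ℂ)) ?_ continuousAt_const
      exact (Complex.continuous_ofReal.comp
        (continuous_const.mul (Real.continuous_exp.comp
          (continuous_const.mul continuous_id)))).continuousAt
    have hφcont : ContinuousAt φ τ := by
      have hF : Continuous (fun M : Matrix (Fin n) (Fin n) ℂ => ∑ i, ∑ j, ‖M i j‖) :=
        continuous_finset_sum _ fun i _ => continuous_finset_sum _ fun j _ =>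
          continuous_norm.comp (continuous_id.matrix_elem i j)
      exact hF.continuousAt.comp hΨcont
    have hev : ∀ᶠ u in nhds τ, φ u < ε := by
      have h1 : Filter.Tendsto φ (nhds τ) (nhds 0) := hφτ ▸ hφcont.tendsto
      exact h1.eventually (gt_mem_nhds hε)
    obtain ⟨δ, hδ, hball⟩ := Metric.eventually_nhds_iff.1 hev
    have hballgood : ∀ u ∈ Set.Icc (0:ℝ) T, dist u τ < δ →
        (σ u + ((ε * Real.exp (K * u) : ℝ) : ℂ) • 1).PosSemidef := by
      intro u hu hud
      have hherm' : (σ u + ((ε * Real.exp (K * u) : ℝ) : ℂ) • 1).IsHermitian := by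
        refine (hσherm u hu).add ?_
        show (((ε * Real.exp (K * u) : ℝ) : ℂ) • (1 : Matrix (Fin n) (Fin n) ℂ))ᴴ = _
        rw [Matrix.conjTranspose_smul, Matrix.conjTranspose_one, Complex.star_def,
          Complex.conj_ofReal]
      refine posSemidef_of_re hherm' fun x => ?_
      have hsplit : q x (σ u + ((ε * Real.exp (K * u) : ℝ) : ℂ) • 1)
          = q x Mτ + q x (σ u + ((ε * Real.exp (K * u) : ℝ) : ℂ) • 1 - Mτ) := by
        rw [← q_add]
        congr 1
        abel
      have h5 := abs_re_q_le x (σ u + ((ε * Real.exp (K * u) : ℝ) : ℂ) • 1 - Mτ)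
      have h6 : (∑ i, ∑ j, 
          ‖(σ u + ((ε * Real.exp (K * u) : ℝ) : ℂ) • 1 - Mτ) i j‖) = φ u := rfl
      rw [h6] at h5
      have h7 := hball hud
      have h8 := hτgap x
      have h9 : 0 ≤ s x := s_nonneg x
      have h10 : (q x (σ u + ((ε * Real.exp (K * u) : ℝ) : ℂ) • 1)).re
          = (q x Mτ).re + (q x (σ u + ((ε * Real.exp (K * u) : ℝ) : ℂ) • 1 - Mτ)).re := by
        rw [hsplit, Complex.add_re]
      rw [h10]
      have h11 : |(q x (σ u + ((ε * Real.exp (K * u) : ℝ) : ℂ) • 1 - Mτ)).re| ≤ φ u * s x := h5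
      have h12 := abs_le.1 h11
      nlinarith [mul_le_mul_of_nonneg_right h7.le h9]
    -- contradiction with τ = inf Bad
    obtain ⟨b, hbBad, hbδ⟩ : ∃ b ∈ Bad, b < τ + δ := by
      by_contra hnb
      push_neg at hnb
      have : τ + δ ≤ τ := le_csInf hBadne hnb
      linarith
    have hbτ : τ ≤ b := hτle b hbBad
    have : dist b τ < δ := by
      rw [Real.dist_eq, abs_of_nonneg (by linarith)]
      linarith
    exact hbBad.2 (hballgood b hbBad.1 this)
  -- let ε → 0
  intro t ht
  have hσPSD : (σ t).PosSemidef := by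
    refine posSemidef_of_re (hσherm t ht) fun x => ?_
    obtain ⟨r, hrdef⟩ : ∃ r, (q x (σ t)).re = r := ⟨_, rfl⟩
    rw [hrdef]
    by_contra hneg
    push_neg at hneg
    obtain ⟨d, hddef⟩ : ∃ d, Real.exp (K * t) * s x = d := ⟨_, rfl⟩
    have hd : 0 ≤ d := hddef ▸ mul_nonneg (Real.exp_pos _).le (s_nonneg x)
    have hne : d + 1 ≠ 0 := by linarith
    have hεp : (0:ℝ) < -r / (d + 1) := div_pos (by linarith) (by linarith)
    have hb := re_q_ge (main (-r / (d + 1)) hεp t ht) x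
    rw [hrdef] at hb
    have heq : -(-r / (d + 1) * Real.exp (K * t) * s x) = r * d / (d + 1) := by
      rw [mul_assoc, hddef]
      field_simp
    rw [heq] at hb
    have hlt : r < r * d / (d + 1) := by
      rw [lt_div_iff₀ (show (0:ℝ) < d + 1 by linarith)]
      nlinarith
    linarith
  rw [hρσ t, ← hEH t]
  exact hσPSD.mul_mul_conjTranspose_same (E t)
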